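/- Derivative of the Lyapunov function along the decoupled dynamics (key identity in the proof of Proposition 8). Assume k_i > 0 for all i and let V̄ ∈ int(ℝⁿ₊) satisfy Ψ^ℓ V̄ + b = 0. If V : [0,∞) → ℝⁿ is continuously differentiable, takes values in int(ℝⁿ₊), and satisfies V̇_i(t) = V_i(t) ((Ψ^ℓ V(t))_i + b_i) for all i and t ≥ 0, then for all t ≥ 0: d/dt 𝒱(V(t)) = (V(t) − V̄)ᵀ Ψ^ℓ (V(t) − V̄) ≤ 0, with equality only when V(t) = V̄. -/

import Mathlib

open Finset Matrix

/-- The Lotka–Volterra Lyapunov function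
`𝒱(V) = Σᵢ [(Vᵢ − V̄ᵢ) − V̄ᵢ (ln Vᵢ − ln V̄ᵢ)]`. -/
noncomputable def lvLyap {n : ℕ} (Vbar V : Fin n → ℝ) : ℝ :=
  ∑ i, ((V i - Vbar i) - Vbar i * (Real.log (V i) - Real.log (Vbar i)))

lemma lvAux_swap (n : ℕ) (f : Fin n → Fin n → ℝ) :
    ∑ i, ∑ j ∈ univ.erase i, f i j = ∑ j, ∑ i ∈ univ.erase j, f i j := by
  rw [Finset.sum_sigma', Finset.sum_sigma']
  exact Finset.sum_nbij' (fun p => ⟨p.2, p.1⟩) (fun p => ⟨p.2, p.1⟩)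
    (by simp [Finset.mem_erase, eq_comm]) (by simp [Finset.mem_erase, eq_comm])
    (by simp) (by simp) (by simp)

lemma lvAux_quad (n : ℕ)
    (B : Fin n → Fin n → ℝ) (Bsh k : Fin n → ℝ)
    (hBsymm : ∀ i j, B i j = B j i)
    (hBsh : ∀ i, 0 ≤ Bsh i)
    (Ψℓ : Matrix (Fin n) (Fin n) ℝ)
    (hΨdiag : ∀ i,
      Ψℓ i i = -((Bsh i + ∑ j ∈ Finset.univ.erase i, |B i j|) + k i))
    (hΨoff : ∀ i j, i ≠ j → Ψℓ i j = |B i j|)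
    (x : Fin n → ℝ) :
    x ⬝ᵥ Ψℓ.mulVec x ≤ ∑ i, -(k i * x i ^ 2) := by
  have hexp : x ⬝ᵥ Ψℓ.mulVec x
      = ∑ i, (Ψℓ i i * x i ^ 2 + ∑ j ∈ univ.erase i, |B i j| * (x i * x j)) := by
    simp only [dotProduct, Matrix.mulVec, dotProduct, Finset.mul_sum]
    refine Finset.sum_congr rfl fun i _ => ?_
    rw [← Finset.sum_erase_add _ _ (Finset.mem_univ i)]
    rw [add_comm]
    congr 1
    · ring
    · exact Finset.sum_congr rfl fun j hj => by
        rw [hΨoff i j (Finset.ne_of_mem_erase hj).symm]; ring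
  rw [hexp]
  have hsw : ∑ i, ∑ j ∈ univ.erase i, |B i j| * x j ^ 2
      = ∑ i, ∑ j ∈ univ.erase i, |B i j| * x i ^ 2 := by
    rw [lvAux_swap]
    exact Finset.sum_congr rfl fun j _ => Finset.sum_congr rfl fun i _ => by
      rw [hBsymm]
  have hbd : ∑ i, ∑ j ∈ univ.erase i, |B i j| * (x i * x j)
      ≤ ∑ i, (∑ j ∈ univ.erase i, |B i j|) * x i ^ 2 := by
    have h1 : ∑ i, ∑ j ∈ univ.erase i, |B i j| * (x i * x j)
        ≤ ∑ i, ∑ j ∈ univ.erase i, |B i j| * ((x i ^ 2 + x j ^ 2) / 2) := by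
      refine Finset.sum_le_sum fun i _ => Finset.sum_le_sum fun j _ => ?_
      have : x i * x j ≤ (x i ^ 2 + x j ^ 2) / 2 := by nlinarith [sq_nonneg (x i - x j)]
      exact mul_le_mul_of_nonneg_left this (abs_nonneg _)
    have h2 : ∑ i, ∑ j ∈ univ.erase i, |B i j| * ((x i ^ 2 + x j ^ 2) / 2)
        = ∑ i, (∑ j ∈ univ.erase i, |B i j|) * x i ^ 2 := by
      calc ∑ i, ∑ j ∈ univ.erase i, |B i j| * ((x i ^ 2 + x j ^ 2) / 2)
          = (∑ i, ∑ j ∈ univ.erase i, |B i j| * x i ^ 2) / 2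
            + (∑ i, ∑ j ∈ univ.erase i, |B i j| * x j ^ 2) / 2 := by
            rw [Finset.sum_div, Finset.sum_div, ← Finset.sum_add_distrib]
            refine Finset.sum_congr rfl fun i _ => ?_
            rw [Finset.sum_div, Finset.sum_div, ← Finset.sum_add_distrib]
            exact Finset.sum_congr rfl fun j _ => by ring
        _ = ∑ i, (∑ j ∈ univ.erase i, |B i j|) * x i ^ 2 := by
            rw [hsw, add_halves]
            exact Finset.sum_congr rfl fun i _ => (Finset.sum_mul _ _ _).symm
    linarith
  have hstep : ∑ i, (Ψℓ i i * x i ^ 2 + ∑ j ∈ univ.erase i, |B i j| * (x i * x j))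
      ≤ ∑ i, (Ψℓ i i * x i ^ 2 + (∑ j ∈ univ.erase i, |B i j|) * x i ^ 2) := by
    rw [Finset.sum_add_distrib, Finset.sum_add_distrib]
    exact add_le_add (le_refl _) hbd
  refine hstep.trans (Finset.sum_le_sum fun i _ => ?_)
  rw [hΨdiag i]
  have := hBsh i
  nlinarith [sq_nonneg (x i)]

/-- Derivative of the Lyapunov function along the decoupled
dynamics (key identity in the proof of Proposition 8). Along interior solutions
of `V̇ᵢ = Vᵢ ((Ψℓ V)ᵢ + bᵢ)`, one has
`d/dt 𝒱(V(t)) = (V(t) − V̄)ᵀ Ψℓ (V(t) − V̄) ≤ 0`, with equality only at `V̄`. -/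
theorem lvLyap_derivative_along_decoupled_dynamics
    (n : ℕ) (hn : 1 ≤ n)
    (B : Fin n → Fin n → ℝ) (Bsh k Vst : Fin n → ℝ)
    (hBsymm : ∀ i j, B i j = B j i)
    (hBle : ∀ i j, i ≠ j → B i j ≤ 0)
    (hBsh : ∀ i, 0 ≤ Bsh i)
    (hk : ∀ i, 0 < k i)
    (hVst : ∀ i, 0 < Vst i)
    (b : Fin n → ℝ) (hb : ∀ i, b i = k i * Vst i)
    (Ψℓ : Matrix (Fin n) (Fin n) ℝ)
    (hΨdiag : ∀ i,
      Ψℓ i i = -((Bsh i + ∑ j ∈ Finset.univ.erase i, |B i j|) + k i))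
    (hΨoff : ∀ i j, i ≠ j → Ψℓ i j = |B i j|)
    (Vbar : Fin n → ℝ)
    (hVbar_pos : ∀ i, 0 < Vbar i)
    (hVbar_eq : Ψℓ.mulVec Vbar + b = 0)
    (V : ℝ → Fin n → ℝ)
    (hC1 : ∀ i, ContDiffOn ℝ 1 (fun t => V t i) (Set.Ici 0))
    (hpos : ∀ t i, 0 < V t i)
    (hODE : ∀ i, ∀ t ∈ Set.Ici (0 : ℝ),
      HasDerivAt (fun s => V s i) (V t i * (Ψℓ.mulVec (V t) i + b i)) t) :
    ∀ t ∈ Set.Ici (0 : ℝ),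
      HasDerivAt (fun s => lvLyap Vbar (V s))
        ((V t - Vbar) ⬝ᵥ Ψℓ.mulVec (V t - Vbar)) t ∧
      (V t - Vbar) ⬝ᵥ Ψℓ.mulVec (V t - Vbar) ≤ 0 ∧
      ((V t - Vbar) ⬝ᵥ Ψℓ.mulVec (V t - Vbar) = 0 → V t = Vbar) := by
  intro t ht
  set x : Fin n → ℝ := V t - Vbar with hx
  have hquad := lvAux_quad n B Bsh k hBsymm hBsh Ψℓ hΨdiag hΨoff x
  have hsumle : ∑ i, -(k i * x i ^ 2) ≤ 0 := by
    refine Finset.sum_nonpos fun i _ => ?_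
    nlinarith [sq_nonneg (x i), (hk i).le]
  refine ⟨?_, hquad.trans hsumle, ?_⟩
  · have hc : ∀ i, Ψℓ.mulVec (V t) i + b i = Ψℓ.mulVec x i := by
      intro i
      have h0 : Ψℓ.mulVec Vbar i + b i = 0 := congrFun hVbar_eq i
      rw [hx, Matrix.mulVec_sub, Pi.sub_apply]
      linarith
    have hderiv : ∀ i, HasDerivAt
        (fun s => (V s i - Vbar i) - Vbar i * (Real.log (V s i) - Real.log (Vbar i)))
        (x i * Ψℓ.mulVec x i) t := by
      intro i
      have h1 := hODE i t ht
      have hne : V t i ≠ 0 := (hpos t i).ne'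
      have hlog := h1.log hne
      have h2 := (hlog.sub_const (Real.log (Vbar i))).const_mul (Vbar i)
      have h3 := (h1.sub_const (Vbar i)).sub h2
      refine h3.congr_deriv ?_
      rw [← hc i]
      have hxi : x i = V t i - Vbar i := rfl
      field_simp [hxi]
      rw [hxi]
    have hsum := HasDerivAt.fun_sum (fun i (_ : i ∈ Finset.univ) => hderiv i)
    exact hsum
  · intro h0
    have hle : (0:ℝ) ≤ ∑ i, -(k i * x i ^ 2) := h0 ▸ hquad
    have hnonpos : ∀ j ∈ Finset.univ, -(k j * x j ^ 2) ≤ (0:ℝ) := fun j _ => by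
      nlinarith [sq_nonneg (x j), (hk j).le]
    have hzero := (Finset.sum_eq_zero_iff_of_nonpos hnonpos).mp
      (le_antisymm hsumle hle)
    funext i
    have hi := hzero i (Finset.mem_univ i)
    have hk0 : k i * x i ^ 2 = 0 := by linarith
    have hsq : x i ^ 2 = 0 := (mul_eq_zero.mp hk0).resolve_left (hk i).ne'
    have hxi : x i = 0 := by
      have := sq_eq_zero_iff.mp hsq
      exact this
    have : V t i - Vbar i = 0 := hxi
    linarith [this]
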